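/- Let D = {(z,w) ∈ C² : |zw| < 1}. If v : D → [-∞, 0) is plurisubharmonic with v(0,0) = -∞, then v ≡ -∞ on the lines {z = 0} and {w = 0}. -/

import Mathlib

open Filter Topology Metric Polynomial

/-- Plurisubharmonicity on a subset of ℂ², via upper semicontinuity and the domination
principle along complex lines: real parts of polynomials (harmonic majorants on discs)
dominating v on a circle of a complex line contained in the set dominate v on the disc. -/
def PshOn (v : ℂ × ℂ → EReal) (D : Set (ℂ × ℂ)) : Prop :=
  UpperSemicontinuousOn v D ∧
  ∀ (a b : ℂ × ℂ) (c : ℂ) (r : ℝ), 0 < r →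
    (∀ t ∈ Metric.closedBall c r, a + t • b ∈ D) →
    ∀ p : Polynomial ℂ,
      (∀ t ∈ Metric.sphere c r, v (a + t • b) ≤ (((p.eval t).re : ℝ) : EReal)) →
      ∀ t ∈ Metric.closedBall c r, v (a + t • b) ≤ (((p.eval t).re : ℝ) : EReal)


private lemma ereal_exists_coe {x : EReal} (h1 : x ≠ ⊥) (h2 : x ≠ ⊤) : ∃ m : ℝ, x = (m : EReal) := by
  induction x using EReal.rec with
  | bot => simp at h1
  | coe m => exact ⟨m, rfl⟩
  | top => simp at h2

/-- add a real constant, cancel -/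
private lemma ereal_le_shift {x : EReal} {c d : ℝ} (h : x + (c : EReal) ≤ (d : EReal)) :
    x ≤ ((d - c : ℝ) : EReal) := by
  have h2 := add_le_add_left h ((-c : ℝ) : EReal)
  rw [add_assoc, ← EReal.coe_add, add_neg_cancel, EReal.coe_zero, add_zero, ← EReal.coe_add] at h2
  simpa [sub_eq_add_neg] using h2

private lemma ereal_eq_shift {x : EReal} {c d : ℝ} (h : x + (c : EReal) = (d : EReal)) :
    x = ((d - c : ℝ) : EReal) := by
  have h2 : x + (c : EReal) + ((-c : ℝ) : EReal) = (d : EReal) + ((-c : ℝ) : EReal) := by rw [h]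
  rw [add_assoc, ← EReal.coe_add, add_neg_cancel, EReal.coe_zero, add_zero, ← EReal.coe_add] at h2
  simpa [sub_eq_add_neg] using h2

/-- USC attains max on compact nonempty sets (EReal-valued). -/
private lemma usc_exists_max {s : Set ℂ} (hs : IsCompact s) (hne : s.Nonempty)
    {f : ℂ → EReal} (hf : UpperSemicontinuousOn f s) :
    ∃ x ∈ s, ∀ y ∈ s, f y ≤ f x := by
  obtain ⟨w, hwmono, hwt, hwmem⟩ :=
    exists_seq_tendsto_sSup (hne.image f) (OrderTop.bddAbove _)
  choose x hxs hfx using hwmem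
  obtain ⟨a, has, φ, hφ, hta⟩ := hs.tendsto_subseq hxs
  refine ⟨a, has, fun y hy => le_trans (le_sSup (Set.mem_image_of_mem f hy)) ?_⟩
  by_contra hcon
  push_neg at hcon
  obtain ⟨c, hc1, hc2⟩ := exists_between hcon
  have hev1 : ∀ᶠ n in atTop, f (x (φ n)) < c := by
    have htw : Filter.Tendsto (x ∘ φ) atTop (𝓝[s] a) :=
      tendsto_nhdsWithin_iff.mpr ⟨hta, Filter.Eventually.of_forall fun n => hxs (φ n)⟩
    exact htw.eventually (hf a has c hc1)
  have hev2 : ∀ᶠ n in atTop, c < f (x (φ n)) := by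
    have : ∀ᶠ n in atTop, c < w n := hwt.eventually (eventually_gt_nhds hc2)
    have h3 := (hφ.tendsto_atTop).eventually this
    filter_upwards [h3] with n hn
    rw [hfx (φ n)]
    exact hn
  obtain ⟨n, h1, h2⟩ := (hev1.and hev2).exists
  exact absurd h1 (not_lt.2 h2.le)

/-- USC plus continuous real function is USC (when u avoids ⊤). -/
private lemma usc_add_cont {s : Set ℂ} {u : ℂ → EReal} (hu : UpperSemicontinuousOn u s)
    (hle : ∀ t, u t ≤ 0) {φ : ℂ → ℝ} (hφ : ContinuousOn φ s) :
    UpperSemicontinuousOn (fun t => u t + ((φ t : ℝ) : EReal)) s := by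
  intro x hx y hy
  induction y using EReal.rec with
  | bot => exact absurd hy (by simp)
  | top =>
    refine Filter.Eventually.of_forall fun t => ?_
    exact lt_of_le_of_lt (add_le_add_left (hle t) _) (by norm_num : (0:EReal) + ((φ t:ℝ):EReal) < ⊤)
  | coe d =>
    have hux : u x < ((d - φ x : ℝ) : EReal) := by
      rw [EReal.coe_sub]
      exact (EReal.lt_sub_iff_add_lt (Or.inl (EReal.coe_ne_bot _)) (Or.inl (EReal.coe_ne_top _))).mpr hy
    obtain ⟨q, hq1, hq2⟩ := EReal.exists_between_coe_real hux
    rw [EReal.coe_lt_coe_iff] at hq2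
    set ε := d - φ x - q with hε
    have hεpos : 0 < ε := by simp [hε]; linarith
    have h1 := hu x hx (q : EReal) hq1
    have h2 : ∀ᶠ t in nhdsWithin x s, φ t < φ x + ε :=
      Filter.Tendsto.eventually_lt_const (by linarith) (hφ x hx)
    filter_upwards [h1, h2] with t ht1 ht2
    calc u t + ((φ t : ℝ) : EReal) ≤ (q : EReal) + ((φ t : ℝ) : EReal) :=
          add_le_add_left ht1.le _
      _ = ((q + φ t : ℝ) : EReal) := by rw [EReal.coe_add]
      _ < ((d : ℝ) : EReal) := by
          rw [EReal.coe_lt_coe_iff]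
          simp only [hε] at ht2 ⊢
          linarith


private lemma log_poly_approx (c : ℂ) {ρ ε : ℝ} (hρ : 0 < ρ) (hρc : ρ < ‖c‖)
    (hε : 0 < ε) :
    ∃ p : Polynomial ℂ, ∀ t ∈ Metric.closedBall c ρ,
      |(p.eval t).re - Real.log (‖t‖)| ≤ ε := by
  have hc0 : (0:ℝ) < ‖c‖ := lt_trans hρ hρc
  have hc : c ≠ 0 := by
    intro h; rw [h] at hc0; simp at hc0
  set r₀ : ℝ := ρ / ‖c‖ with hr₀
  have hr₀pos : 0 < r₀ := div_pos hρ hc0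
  have hr₀lt : r₀ < 1 := (div_lt_one hc0).mpr hρc
  -- choose N
  obtain ⟨N, hN⟩ : ∃ N : ℕ, r₀ ^ N * (1 - r₀)⁻¹ < ε := by
    have h1 : Filter.Tendsto (fun n : ℕ => r₀ ^ n * (1 - r₀)⁻¹) atTop (𝓝 (0 * (1 - r₀)⁻¹)) :=
      (tendsto_pow_atTop_nhds_zero_of_lt_one hr₀pos.le hr₀lt).mul_const _
    rw [zero_mul] at h1
    exact (h1.eventually_lt_const hε).exists
  refine ⟨Polynomial.C (Complex.log c) + ∑ j ∈ Finset.range (N+1),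
      Polynomial.C ((-1)^(j+1) * (j:ℂ)⁻¹) * (Polynomial.C c⁻¹ * (Polynomial.X - Polynomial.C c))^j, ?_⟩
  intro t ht
  rw [Metric.mem_closedBall, Complex.dist_eq] at ht
  set z : ℂ := c⁻¹ * (t - c) with hz
  have hznorm : ‖z‖ ≤ r₀ := by
    rw [hz, norm_mul, norm_inv]
    rw [hr₀]
    rw [div_eq_inv_mul]
    exact mul_le_mul_of_nonneg_left ht (by positivity)
  have hz1 : ‖z‖ < 1 := lt_of_le_of_lt hznorm hr₀lt
  have ht0 : t ≠ 0 := by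
    intro h
    rw [h] at ht
    simp only [zero_sub, norm_neg] at ht
    linarith
  -- evaluation
  have heval : Polynomial.eval t (Polynomial.C (Complex.log c) + ∑ j ∈ Finset.range (N+1),
      Polynomial.C ((-1)^(j+1) * (j:ℂ)⁻¹) * (Polynomial.C c⁻¹ * (Polynomial.X - Polynomial.C c))^j)
      = Complex.log c + Complex.logTaylor (N+1) z := by
    rw [Polynomial.eval_add, Polynomial.eval_C, Polynomial.eval_finset_sum]
    congr 1
    rw [Complex.logTaylor]
    refine Finset.sum_congr rfl fun j _ => ?_
    simp only [Polynomial.eval_mul, Polynomial.eval_C, Polynomial.eval_pow, Polynomial.eval_sub,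
      Polynomial.eval_X]
    rw [hz]
    ring
  rw [heval]
  -- key identity : Real.log |t| = (log c + log (1+z)).re
  have habs1z : ‖1 + z‖ = ‖t‖ / ‖c‖ := by
    have : (1 : ℂ) + z = c⁻¹ * t := by
      rw [hz]; field_simp; ring
    rw [this, norm_mul, norm_inv]
    rw [inv_mul_eq_div]
  have hkey : Real.log (‖t‖)
      = (Complex.log c + Complex.log (1 + z)).re := by
    rw [Complex.add_re, Complex.log_re, Complex.log_re, habs1z,
      Real.log_div (by simpa using ht0) (ne_of_gt hc0)]
    ring
  rw [hkey]
  have hdiff : (Complex.log c + Complex.logTaylor (N+1) z).re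
      - (Complex.log c + Complex.log (1 + z)).re
      = (Complex.logTaylor (N+1) z - Complex.log (1 + z)).re := by
    simp only [Complex.add_re, Complex.sub_re]
    ring
  rw [hdiff]
  calc |(Complex.logTaylor (N+1) z - Complex.log (1 + z)).re|
      ≤ ‖Complex.logTaylor (N+1) z - Complex.log (1 + z)‖ := Complex.abs_re_le_norm _
    _ = ‖Complex.log (1 + z) - Complex.logTaylor (N+1) z‖ := by
        rw [norm_sub_rev]
    _ ≤ ‖z‖ ^ (N + 1) * (1 - ‖z‖)⁻¹ / (N + 1) := Complex.norm_log_sub_logTaylor_le N hz1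
    _ ≤ ‖z‖ ^ (N + 1) * (1 - ‖z‖)⁻¹ := by
        rw [div_le_iff₀ (by positivity)]
        have h1 : (0:ℝ) ≤ ‖z‖ ^ (N + 1) * (1 - ‖z‖)⁻¹ := by
          apply mul_nonneg (by positivity)
          rw [inv_nonneg]; linarith
        nlinarith [h1]
    _ ≤ r₀ ^ (N+1) * (1 - r₀)⁻¹ := by
        apply mul_le_mul (pow_le_pow_left₀ (norm_nonneg _) hznorm _) _ _ (by positivity)
        · exact inv_anti₀ (by linarith) (by linarith)
        · rw [inv_nonneg]; linarith
    _ ≤ r₀ ^ N * (1 - r₀)⁻¹ := by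
        apply mul_le_mul_of_nonneg_right _ (by rw [inv_nonneg]; linarith)
        exact pow_le_pow_of_le_one hr₀pos.le hr₀lt.le (Nat.le_succ N)
    _ ≤ ε := hN.le

set_option maxHeartbeats 1000000 in
private lemma core (u : ℂ → EReal) (husc : UpperSemicontinuous u) (hle : ∀ t, u t ≤ 0)
    (hdom : ∀ (c : ℂ) (r : ℝ), 0 < r → ∀ p : Polynomial ℂ,
      (∀ t ∈ Metric.sphere c r, u t ≤ (((p.eval t).re : ℝ) : EReal)) →
      ∀ t ∈ Metric.closedBall c r, u t ≤ (((p.eval t).re : ℝ) : EReal))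
    (h0 : u 0 = ⊥) : ∀ z, u z = ⊥ := by
  intro z
  rcases eq_or_ne z 0 with rfl | hz0
  · exact h0
  set az := ‖z‖ with haz
  have hazpos : 0 < az := by
    rw [haz]; exact norm_pos_iff.mpr hz0
  suffices key : ∀ C : ℝ, 0 < C → u z ≤ ((-C/2 : ℝ) : EReal) by
    rw [EReal.eq_bot_iff_forall_lt]
    intro y
    refine lt_of_le_of_lt (key (2*(|y|+1)) (by positivity)) ?_
    rw [EReal.coe_lt_coe_iff]
    have := neg_abs_le y
    linarith
  intro C hC
  have h1 : u 0 < ((-C : ℝ) : EReal) := by rw [h0]; exact EReal.bot_lt_coe _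
  obtain ⟨δ₀, hδ₀pos, hball⟩ := Metric.eventually_nhds_iff.mp (husc 0 _ h1)
  set δ := min (δ₀/2) (az/2) with hδ
  have hδpos : 0 < δ := lt_min (by linarith) (by linarith)
  have hδaz : δ < az := lt_of_le_of_lt (min_le_right _ _) (by linarith)
  have hsmall : ∀ t : ℂ, ‖t‖ ≤ δ → u t ≤ ((-C : ℝ) : EReal) := by
    intro t ht
    refine (hball ?_).le
    rw [Complex.dist_eq, sub_zero]
    exact lt_of_le_of_lt ht (lt_of_le_of_lt (min_le_left _ _) (by linarith))
  set R := az^2/δ with hR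
  have hRpos : 0 < R := by positivity
  have hazR : az < R := by
    rw [hR, lt_div_iff₀ hδpos]
    nlinarith
  have hδR : δ < R := hδaz.trans hazR
  set L := Real.log (az/δ) with hL
  have hLpos : 0 < L := Real.log_pos ((one_lt_div hδpos).mpr hδaz)
  set a := C/(2*L) with ha
  have hapos : 0 < a := by positivity
  set b := -(a * Real.log R) with hb
  have hlogR : Real.log R = 2*Real.log az - Real.log δ := by
    rw [hR, Real.log_div (by positivity) (ne_of_gt hδpos), Real.log_pow]
    push_cast; ring
  have hLval : L = Real.log az - Real.log δ := by
    rw [hL, Real.log_div (ne_of_gt hazpos) (ne_of_gt hδpos)]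
  have hals : a * (2 * L) = C := by rw [ha]; field_simp
  have f1 : a * Real.log δ + b = -C := by
    rw [hb, hlogR, ← hals, hLval]; ring
  have f2 : a * Real.log az + b = -C/2 := by
    rw [hb, hlogR, ← hals, hLval]; ring
  have f3 : a * Real.log R + b = 0 := by rw [hb]; ring
  clear_value az δ R L a b
  -- main annulus claim
  have claim : ∀ η : ℝ, 0 < η → ∀ t : ℂ, δ ≤ ‖t‖ → ‖t‖ ≤ R →
      u t ≤ ((a * Real.log (‖t‖) + b + η*(R^2 - (‖t‖)^2) : ℝ) : EReal) := by
    intro η hη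
    by_contra hcon
    push_neg at hcon
    obtain ⟨t₀, ht₀δ, ht₀R, ht₀⟩ := hcon
    set g : ℂ → ℝ := fun t => a * Real.log (‖t‖) + b + η*(R^2 - (‖t‖)^2)
      with hg
    have ht₀g : ((g t₀ : ℝ) : EReal) < u t₀ := ht₀
    set A : Set ℂ := Metric.closedBall 0 R ∩ {t : ℂ | δ ≤ ‖t‖} with hA
    have hmemA : ∀ t : ℂ, t ∈ A ↔ (δ ≤ ‖t‖ ∧ ‖t‖ ≤ R) := by
      intro t
      rw [hA, Set.mem_inter_iff, Metric.mem_closedBall, Complex.dist_eq, sub_zero]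
      exact ⟨fun h => ⟨h.2, h.1⟩, fun h => ⟨h.2, h.1⟩⟩
    have hAcomp : IsCompact A := (isCompact_closedBall _ _).inter_right
      (isClosed_le continuous_const continuous_norm)
    have hA0 : t₀ ∈ A := (hmemA t₀).mpr ⟨ht₀δ, ht₀R⟩
    have hgcont : ContinuousOn g A := by
      apply continuousOn_of_forall_continuousAt
      intro x hx
      have hxpos : 0 < ‖x‖ := lt_of_lt_of_le hδpos ((hmemA x).mp hx).1
      have hlogc : ContinuousAt (fun t : ℂ => Real.log (‖t‖)) x :=
        (Real.continuousAt_log (ne_of_gt hxpos)).comp continuous_norm.continuousAt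
      exact ((continuousAt_const.mul hlogc).add continuousAt_const).add
        (continuousAt_const.mul (continuousAt_const.sub
          ((continuous_norm.continuousAt).pow 2)))
    set f : ℂ → EReal := fun t => u t + ((-g t : ℝ) : EReal) with hf
    have fusc : UpperSemicontinuousOn f A :=
      usc_add_cont (husc.upperSemicontinuousOn A) hle hgcont.neg
    obtain ⟨ts, htsA, hmax⟩ := usc_exists_max hAcomp ⟨t₀, hA0⟩ fusc
    have hft₀ : (0 : EReal) < f t₀ := by
      have h2 := EReal.add_lt_add_right_coe ht₀g (-g t₀)
      rw [← EReal.coe_add, add_neg_cancel, EReal.coe_zero] at h2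
      exact h2
    have hfts_pos : (0 : EReal) < f ts := lt_of_lt_of_le hft₀ (hmax t₀ hA0)
    have hftop : f ts ≠ ⊤ := by
      have : f ts < ⊤ :=
        EReal.add_lt_top (ne_top_of_le_ne_top (by simp) (hle ts)) (EReal.coe_ne_top _)
      exact this.ne
    have hfbot : f ts ≠ ⊥ := by
      have : (⊥ : EReal) < f ts := lt_trans (by simp) hfts_pos
      exact this.ne'
    obtain ⟨m, hm⟩ := ereal_exists_coe hfbot hftop
    have hmpos : 0 < m := by
      rw [hm] at hfts_pos
      exact_mod_cast hfts_pos
    have huts : u ts = ((g ts + m : ℝ) : EReal) := by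
      have hm' : u ts + ((-g ts : ℝ) : EReal) = (m : EReal) := hm
      have := ereal_eq_shift hm'
      rwa [show m - -g ts = g ts + m by ring] at this
    have htsδ : δ < ‖ts‖ := by
      rcases lt_or_eq_of_le ((hmemA ts).mp htsA).1 with h | h
      · exact h
      exfalso
      have h1 := hsmall ts h.ge
      rw [huts, EReal.coe_le_coe_iff] at h1
      have hgts : g ts = -C + η*(R^2 - δ^2) := by
        show a * Real.log (‖ts‖) + b + η * (R ^ 2 - ‖ts‖ ^ 2)
          = -C + η*(R^2 - δ^2)
        rw [← h]
        linarith [f1]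
      nlinarith [mul_pos hη (show (0:ℝ) < R^2 - δ^2 by nlinarith)]
    have htsR : ‖ts‖ < R := by
      rcases lt_or_eq_of_le ((hmemA ts).mp htsA).2 with h | h
      · exact h
      exfalso
      have h1 := hle ts
      rw [huts] at h1
      have h1' : g ts + m ≤ 0 := by exact_mod_cast h1
      have hgts : g ts = 0 := by
        show a * Real.log (‖ts‖) + b + η * (R ^ 2 - ‖ts‖ ^ 2) = 0
        rw [h]
        linarith [f3]
      linarith
    -- interior point: construct the dominating polynomial
    set ρ := min (‖ts‖ - δ) (R - ‖ts‖) with hρ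
    have hρpos : 0 < ρ := lt_min (by linarith) (by linarith)
    have hρts : ρ < ‖ts‖ := lt_of_le_of_lt (min_le_left _ _) (by linarith)
    set ε' := η*ρ^2/4 with hε'
    have hε'pos : 0 < ε' := by positivity
    have hε'eq : η * ρ^2 = 4 * ε' := by rw [hε']; ring
    clear_value ρ ε'
    obtain ⟨p₀, hp₀⟩ := log_poly_approx ts hρpos hρts (show (0:ℝ) < ε'/a by positivity)
    set q : Polynomial ℂ := Polynomial.C ((a:ℝ):ℂ) * p₀
        + Polynomial.C (((b + η*(R^2 - (‖ts‖)^2 - ρ^2) + ε' + m : ℝ) : ℂ))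
        - Polynomial.C (((2*η : ℝ):ℂ)) * Polynomial.C ((starRingEnd ℂ) ts)
          * (Polynomial.X - Polynomial.C ts) with hq
    have hre : ∀ t : ℂ, (q.eval t).re = a * (p₀.eval t).re
        + (b + η*(R^2 - (‖ts‖)^2 - ρ^2) + ε' + m)
        - 2*η*(((starRingEnd ℂ) ts * (t - ts)).re) := by
      intro t
      rw [hq]
      simp only [Polynomial.eval_sub, Polynomial.eval_add, Polynomial.eval_mul, Polynomial.eval_C,
        Polynomial.eval_X, Complex.sub_re, Complex.add_re, Complex.mul_re, Complex.mul_im,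
        Complex.ofReal_re, Complex.ofReal_im]
      ring
    have hsph_id : ∀ t : ℂ, ‖t - ts‖ = ρ →
        2*(((starRingEnd ℂ) ts * (t - ts)).re)
          = (‖t‖)^2 - (‖ts‖)^2 - ρ^2 := by
      intro t habs
      have h1 : Complex.normSq (ts + (t - ts)) = Complex.normSq ts + Complex.normSq (t - ts)
          + 2 * (ts * (starRingEnd ℂ) (t - ts)).re := Complex.normSq_add _ _
      rw [show ts + (t - ts) = t by ring] at h1
      have h2 : (ts * (starRingEnd ℂ) (t - ts)).re = (((starRingEnd ℂ) ts) * (t - ts)).re := by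
        rw [← Complex.conj_re (((starRingEnd ℂ) ts) * (t - ts)), map_mul, Complex.conj_conj]
      rw [h2] at h1
      have h3 : (‖t‖)^2 = Complex.normSq t := Complex.sq_norm t
      have h4 : (‖ts‖)^2 = Complex.normSq ts := Complex.sq_norm ts
      have h5 : Complex.normSq (t - ts) = ρ^2 := by rw [← Complex.sq_norm, habs]
      rw [h3, h4]
      linarith
    have hsphere_bound : ∀ t ∈ Metric.sphere ts ρ, u t ≤ (((q.eval t).re : ℝ) : EReal) := by
      intro t htsp
      rw [Metric.mem_sphere, Complex.dist_eq] at htsp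
      have htA : t ∈ A := by
        rw [hmemA]
        have hl : ‖ts‖ - ‖t‖ ≤ ρ := by
          calc ‖ts‖ - ‖t‖ ≤ ‖ts - t‖ := by
                have := norm_sub_norm_le ts t
                simpa using this
            _ = ρ := by rw [← htsp, ← norm_neg]; congr 1; ring
        have hu2 : ‖t‖ ≤ ‖ts‖ + ρ := by
          calc ‖t‖ = ‖ts + (t - ts)‖ := by congr 1; ring
            _ ≤ ‖ts‖ + ‖t - ts‖ := norm_add_le _ _
            _ = ‖ts‖ + ρ := by rw [htsp]
        constructor
        · have := min_le_left (‖ts‖ - δ) (R - ‖ts‖)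
          rw [← hρ] at this
          linarith
        · have := min_le_right (‖ts‖ - δ) (R - ‖ts‖)
          rw [← hρ] at this
          linarith
      have hfle : f t ≤ (m : EReal) := by rw [← hm]; exact hmax t htA
      have hfle' : u t + ((-g t : ℝ) : EReal) ≤ (m : EReal) := hfle
      have hub : u t ≤ ((g t + m : ℝ):EReal) := by
        have := ereal_le_shift hfle'
        rwa [show m - -g t = g t + m by ring] at this
      refine le_trans hub ?_
      rw [EReal.coe_le_coe_iff]
      have happ := hp₀ t (by
        rw [Metric.mem_closedBall, Complex.dist_eq, htsp])
      rw [abs_le] at happ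
      have hid := hsph_id t htsp
      have hid2 : η*(2*(((starRingEnd ℂ) ts * (t - ts)).re))
          = η*((‖t‖)^2 - (‖ts‖)^2 - ρ^2) := by rw [hid]
      have hcancel : a * (ε'/a) = ε' := mul_div_cancel₀ _ (ne_of_gt hapos)
      have key1 : a * Real.log (‖t‖) - ε' ≤ a * ((p₀.eval t).re) := by
        have h6 := mul_le_mul_of_nonneg_left happ.1 hapos.le
        rw [mul_sub, mul_neg, hcancel] at h6
        linarith
      rw [hre t]
      show a * Real.log (‖t‖) + b + η * (R ^ 2 - ‖t‖ ^ 2) + m ≤ _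
      linarith [hid2, key1]
    have hcb := hdom ts ρ hρpos q hsphere_bound ts (Metric.mem_closedBall_self hρpos.le)
    rw [huts, EReal.coe_le_coe_iff, hre ts] at hcb
    rw [sub_self, mul_zero, Complex.zero_re, mul_zero, sub_zero] at hcb
    have happc := hp₀ ts (Metric.mem_closedBall_self hρpos.le)
    rw [abs_le] at happc
    have hcancel : a * (ε'/a) = ε' := mul_div_cancel₀ _ (ne_of_gt hapos)
    have key2 : a * ((p₀.eval ts).re) ≤ a * Real.log (‖ts‖) + ε' := by
      have h6 := mul_le_mul_of_nonneg_left happc.2 hapos.le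
      rw [mul_sub, hcancel] at h6
      linarith
    have hgtse : g ts = a * Real.log (‖ts‖) + b
        + η * (R ^ 2 - ‖ts‖ ^ 2) := rfl
    linarith [hcb, key2, hgtse, hε'eq, hε'pos]
  -- conclude from the claim
  by_contra hcc
  have hcc' : ((-C/2 : ℝ) : EReal) < u z := not_le.mp hcc
  obtain ⟨y, hy1, hy2⟩ := EReal.exists_between_coe_real hcc'
  rw [EReal.coe_lt_coe_iff] at hy1
  have hRz : 0 < R^2 - az^2 := by nlinarith
  set η := (y + C/2)/(R^2 - az^2) with hη'
  have hηpos : 0 < η := by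
    rw [hη']
    apply div_pos
    · linarith
    · exact hRz
  have := claim η hηpos z (haz ▸ hδaz.le) (haz ▸ hazR.le)
  have heq : a * Real.log (‖z‖) + b + η*(R^2 - (‖z‖)^2) = y := by
    rw [← haz]
    rw [f2]
    rw [hη']
    field_simp
    ring
  rw [heq] at this
  exact absurd hy2 (not_lt.mpr this)


set_option maxHeartbeats 1000000 in
/-- On D = {(z,w) : |zw| < 1}, a negative plurisubharmonic function with v(0,0) = -∞
is identically -∞ on the coordinate lines {z = 0} and {w = 0}. -/
theorem stmt_7 (v : ℂ × ℂ → EReal)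
    (hpsh : PshOn v {p : ℂ × ℂ | ‖p.1 * p.2‖ < 1})
    (hneg : ∀ p : ℂ × ℂ, ‖p.1 * p.2‖ < 1 → v p < 0)
    (h0 : v (0, 0) = ⊥) :
    ∀ z : ℂ, v (z, 0) = ⊥ ∧ v (0, z) = ⊥ := by
  obtain ⟨husc, hdom⟩ := hpsh
  have line : ∀ b : ℂ × ℂ,
      (∀ t : ℂ, ((((0:ℂ),(0:ℂ)) : ℂ × ℂ) + t • b) ∈
        {p : ℂ × ℂ | ‖p.1 * p.2‖ < 1}) →
      ∀ t : ℂ, v ((((0:ℂ),(0:ℂ)) : ℂ × ℂ) + t • b) = ⊥ := by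
    intro b hD
    have hcont : Continuous (fun t : ℂ => ((((0:ℂ),(0:ℂ)) : ℂ × ℂ) + t • b)) :=
      continuous_const.add (continuous_id.smul continuous_const)
    refine core (fun t => v ((((0:ℂ),(0:ℂ)) : ℂ × ℂ) + t • b)) ?_ ?_ ?_ ?_
    · intro x y hy
      have h2 := husc _ (hD x) y hy
      have htd : Filter.Tendsto (fun t : ℂ => ((((0:ℂ),(0:ℂ)) : ℂ × ℂ) + t • b)) (nhds x)
          (nhdsWithin ((((0:ℂ),(0:ℂ)) : ℂ × ℂ) + x • b)
            {p : ℂ × ℂ | ‖p.1 * p.2‖ < 1}) :=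
        tendsto_nhdsWithin_iff.mpr ⟨hcont.tendsto x, Filter.Eventually.of_forall hD⟩
      exact htd.eventually h2
    · exact fun t => (hneg _ (hD t)).le
    · exact fun c r hr p hp => hdom ((0:ℂ),(0:ℂ)) b c r hr (fun t _ => hD t) p hp
    · simpa using h0
  intro z
  constructor
  · have h1 := line ((1:ℂ), (0:ℂ)) (by
      intro t
      simp [Prod.smul_mk, smul_eq_mul]) z
    simpa [Prod.smul_mk, smul_eq_mul] using h1
  · have h1 := line ((0:ℂ), (1:ℂ)) (by
      intro t
      simp [Prod.smul_mk, smul_eq_mul]) z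
    simpa [Prod.smul_mk, smul_eq_mul] using h1
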